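/- arXiv:1712.03297 — 4 statements merged into one kernel-verified Lean document; each statement's English description precedes it below -/
import Mathlib

section
/- Let a = (0,0), b = (1,0), o = (1/2,0), and y ≥ 0. If p ∈ ℝ² satisfies |op| > √3/2 + (2/√3)·y, then max(|ap|, |bp|) > 1 + y. -/
/-- Lemma 3 (case `y ≥ 0`): if `|ab| = 1`, `o` is the midpoint of `ab`, and
`|op| > √3/2 + (2/√3)·y`, then `max (|ap|, |bp|) > 1 + y`. -/
theorem stmt_5 (a b p : EuclideanSpace ℝ (Fin 2)) (y : ℝ) (hy : 0 ≤ y)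
    (hab : dist a b = 1)
    (hp : dist (midpoint ℝ a b) p > Real.sqrt 3 / 2 + (2 / Real.sqrt 3) * y) :
    max (dist a p) (dist b p) > 1 + y := by
  have key := EuclideanGeometry.dist_sq_add_dist_sq_eq_two_mul_dist_midpoint_sq_add_half_dist_sq
    p a b
  rw [dist_comm p a, dist_comm p b, dist_comm p (midpoint ℝ a b), hab] at key
  set M := max (dist a p) (dist b p) with hM
  have h1 : dist a p ≤ M := le_max_left _ _
  have h2 : dist b p ≤ M := le_max_right _ _
  have hM0 : 0 ≤ M := le_trans dist_nonneg h1
  have hsq : dist (midpoint ℝ a b) p ^ 2 + 1/4 ≤ M ^ 2 := by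
    nlinarith [dist_nonneg (x := a) (y := p), dist_nonneg (x := b) (y := p)]
  have hs3 : Real.sqrt 3 ^ 2 = 3 := Real.sq_sqrt (by norm_num)
  have hs3pos : 0 < Real.sqrt 3 := Real.sqrt_pos.mpr (by norm_num)
  have hrhs : (Real.sqrt 3 / 2 + (2 / Real.sqrt 3) * y) ^ 2 = 3/4 + 2*y + 4/3 * y^2 := by
    field_simp
    nlinarith [hs3]
  have hd0 : 0 ≤ Real.sqrt 3 / 2 + (2 / Real.sqrt 3) * y := by positivity
  have hdsq : (Real.sqrt 3 / 2 + (2 / Real.sqrt 3) * y) ^ 2 < dist (midpoint ℝ a b) p ^ 2 := by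
    have := dist_nonneg (x := midpoint ℝ a b) (y := p)
    nlinarith
  have hMsq : (1 + y) ^ 2 < M ^ 2 := by nlinarith
  nlinarith
end

section
/- For all z ∈ [0, 0.2]: 2√(1 + 4z²) / min(4, 2 + √3 + 2z) ≥ √(2 − √3). -/
/-- Case 1 (`y ≤ 0`) of the refined analysis:
for `z ∈ [0, 0.2]`, `2√(1 + 4z²) / min(4, 2 + √3 + 2z) ≥ √(2 − √3)`. -/
theorem stmt_14 (z : ℝ) (hz0 : 0 ≤ z) (hz1 : z ≤ 0.2) :
    2 * Real.sqrt (1 + 4 * z ^ 2) / min 4 (2 + Real.sqrt 3 + 2 * z)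
      ≥ Real.sqrt (2 - Real.sqrt 3) := by
  have h3 : Real.sqrt 3 ^ 2 = 3 := Real.sq_sqrt (by norm_num)
  have h3le : Real.sqrt 3 ≤ 2 := by
    nlinarith [Real.sqrt_nonneg 3]
  have h3ge : (1:ℝ) ≤ Real.sqrt 3 := by
    nlinarith [Real.sqrt_nonneg 3]
  set a := Real.sqrt (2 - Real.sqrt 3) with ha_def
  set b := Real.sqrt (1 + 4 * z ^ 2) with hb_def
  have ha : 0 ≤ a := Real.sqrt_nonneg _
  have hb : 0 ≤ b := Real.sqrt_nonneg _
  have hA : a ^ 2 = 2 - Real.sqrt 3 := Real.sq_sqrt (by linarith)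
  have hB : b ^ 2 = 1 + 4 * z ^ 2 := Real.sq_sqrt (by positivity)
  have hden : (0:ℝ) < 2 + Real.sqrt 3 + 2 * z := by linarith
  have hmin : (0:ℝ) < min 4 (2 + Real.sqrt 3 + 2 * z) := lt_min (by norm_num) hden
  have key : a * (2 + Real.sqrt 3 + 2 * z) ≤ 2 * b := by
    have hsq : (a * (2 + Real.sqrt 3 + 2 * z)) ^ 2 ≤ (2 * b) ^ 2 := by
      have expand : (a * (2 + Real.sqrt 3 + 2 * z)) ^ 2
          = (2 - Real.sqrt 3) * (2 + Real.sqrt 3 + 2 * z) ^ 2 := by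
        rw [mul_pow, hA]
      rw [expand, mul_pow, hB]
      nlinarith [sq_nonneg ((8 + 4 * Real.sqrt 3) * z - 2)]
    calc a * (2 + Real.sqrt 3 + 2 * z)
        = Real.sqrt ((a * (2 + Real.sqrt 3 + 2 * z)) ^ 2) :=
          (Real.sqrt_sq (mul_nonneg ha hden.le)).symm
      _ ≤ Real.sqrt ((2 * b) ^ 2) := Real.sqrt_le_sqrt hsq
      _ = 2 * b := Real.sqrt_sq (by linarith)
  rw [ge_iff_le, le_div_iff₀ hmin]
  calc a * min 4 (2 + Real.sqrt 3 + 2 * z)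
      ≤ a * (2 + Real.sqrt 3 + 2 * z) :=
        mul_le_mul_of_nonneg_left (min_le_right _ _) ha
    _ ≤ 2 * b := key
end

section
/- For all y, z ∈ [0, 0.2]: max(1 + y, √(1 + 4z²)) / min(2, 1 + √3/2 + z + (2/√3)·y) ≥ (4√3 + 2 − 27^{1/4})/13. -/
set_option maxHeartbeats 1000000

private lemma aux_bounds {s q : ℝ} (hs0 : 0 < s) (hs : s ^ 2 = 3)
    (hq0 : 0 < q) (hq2 : q ^ 2 = 3 * s) :
    1.73 ≤ s ∧ s ≤ 1.741 ∧ 2.27 ≤ q ∧ q ≤ 2.29 := by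
  have hsl : 1.73 ≤ s := by nlinarith
  have hsu : s ≤ 1.741 := by nlinarith
  have hql : 2.27 ≤ q := by nlinarith
  have hqu : q ≤ 2.29 := by nlinarith
  exact ⟨hsl, hsu, hql, hqu⟩

private lemma aux_main {s q N y z D : ℝ} (hs : s ^ 2 = 3) (hq2 : q ^ 2 = 3 * s)
    (hsl : 1.73 ≤ s) (hsu : s ≤ 1.741) (hql : 2.27 ≤ q) (hqu : q ≤ 2.29)
    (hN1 : 1 + y ≤ N)
    (hN2' : 1 + 4 * ((-3 : ℝ) / 13 - s / 26 + (4 / 39) * (s * q)) * z ≤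
      N * ((4 - 2 * q + 8 * s) / 13))
    (hD2 : D ≤ 2) (hDL' : D ≤ 1 + s / 2 + z + (2 * s / 3) * y) :
    (2 - q + 4 * s) * D ≤ 13 * N := by
  have hprod : 0 ≤ (s - 1.73) * (q - 2.27) :=
    mul_nonneg (by linarith) (by linarith)
  have hprod2 : 0 ≤ (1.741 - s) * (2.29 - q) :=
    mul_nonneg (by linarith) (by linarith)
  have hl1 : 0 ≤ 16 - 4 * q - (2/3) * (s * q) := by nlinarith
  have hl2 : 0 ≤ (13/6 : ℝ) * (s * q) := by positivity
  have hl3 : 0 ≤ 2 - 4 * s + 2 * (s * q) := by nlinarith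
  have hl4 : 0 ≤ - q + 8 * s - 2 * (s * q) := by nlinarith
  have t1 : 0 ≤ (16 - 4 * q - (2/3) * (s * q)) * (N - 1 - y) :=
    mul_nonneg hl1 (by linarith)
  have t2 : 0 ≤ ((13/6 : ℝ) * (s * q)) *
      (N * ((4 - 2 * q + 8 * s) / 13) -
        (1 + 4 * ((-3 : ℝ) / 13 - s / 26 + (4 / 39) * (s * q)) * z)) :=
    mul_nonneg hl2 (by linarith)
  have t3 : 0 ≤ (2 - 4 * s + 2 * (s * q)) * (2 - D) := mul_nonneg hl3 (by linarith)
  have t4 : 0 ≤ (- q + 8 * s - 2 * (s * q)) *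
      ((1 + s / 2 + z + (2 * s / 3) * y) - D) := mul_nonneg hl4 (by linarith)
  have hEq : 13 * N - (2 - q + 4 * s) * D =
      (16 - 4 * q - (2/3) * (s * q)) * (N - 1 - y) +
      ((13/6 : ℝ) * (s * q)) *
        (N * ((4 - 2 * q + 8 * s) / 13) -
          (1 + 4 * ((-3 : ℝ) / 13 - s / 26 + (4 / 39) * (s * q)) * z)) +
      (2 - 4 * s + 2 * (s * q)) * (2 - D) +
      (- q + 8 * s - 2 * (s * q)) * ((1 + s / 2 + z + (2 * s / 3) * y) - D) := by
    linear_combination ((8:ℝ)/9 * z * s * s + (1:ℝ)/3 * N * s) * hq2 +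
      ((-4:ℝ) + q + (-1/3)*z*q + (8/3)*z*s + (-16/3)*y + (4/3)*y*q + N + (-4/3)*N*q) * hs
  linarith

private lemma aux_tangent {s q z t : ℝ} (hs : s ^ 2 = 3) (hq2 : q ^ 2 = 3 * s)
    (hsl : 1.73 ≤ s) (hsu : s ≤ 1.741) (hql : 2.27 ≤ q) (hqu : q ≤ 2.29)
    (hz0 : 0 ≤ z) (ht0 : 0 ≤ t) (ht2 : t ^ 2 = 1 + 4 * z ^ 2) :
    1 + 4 * ((-3 : ℝ) / 13 - s / 26 + (4 / 39) * (s * q)) * z ≤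
      t * ((4 - 2 * q + 8 * s) / 13) := by
  have hprod : 0 ≤ (s - 1.73) * (q - 2.27) :=
    mul_nonneg (by linarith) (by linarith)
  have hm00 : (0:ℝ) ≤ (4 - 2 * q + 8 * s) / 13 := by nlinarith
  have hz00 : (0:ℝ) ≤ (-3 : ℝ) / 13 - s / 26 + (4 / 39) * (s * q) := by nlinarith
  have e1 : (t * ((4 - 2 * q + 8 * s) / 13)) ^ 2 -
      (1 + 4 * ((-3 : ℝ) / 13 - s / 26 + (4 / 39) * (s * q)) * z) ^ 2 =
      4 * (z - ((-3 : ℝ) / 13 - s / 26 + (4 / 39) * (s * q))) ^ 2 +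
      ((16/169) + (-16/169)*q + (4/169)*q*q + (64/169)*s + (-32/169)*s*q + (64/169)*s*s)
        * (t ^ 2 - (1 + 4 * z ^ 2)) := by
    linear_combination ((4:ℝ)/169 + (-64/1521)*s*s + (16/169)*z*z + (-256/1521)*z*z*s*s) * hq2 +
      ((63:ℝ)/169 + (16/507)*q + (-64/507)*s + (252/169)*z*z + (64/507)*z*z*q + (-256/507)*z*z*s) * hs
  have h2 : t ^ 2 - (1 + 4 * z ^ 2) = 0 := by rw [ht2]; ring
  have e1' : (1 + 4 * ((-3 : ℝ) / 13 - s / 26 + (4 / 39) * (s * q)) * z) ^ 2 ≤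
      (t * ((4 - 2 * q + 8 * s) / 13)) ^ 2 := by
    nlinarith [e1, h2, sq_nonneg (z - ((-3 : ℝ) / 13 - s / 26 + (4 / 39) * (s * q)))]
  have hP0 : (0:ℝ) ≤ 1 + 4 * ((-3 : ℝ) / 13 - s / 26 + (4 / 39) * (s * q)) * z := by
    nlinarith [mul_nonneg hz00 hz0]
  have htm0 : (0:ℝ) ≤ t * ((4 - 2 * q + 8 * s) / 13) := mul_nonneg ht0 hm00
  nlinarith [e1', hP0, htm0]

/-- Case 2 (`y ≥ 0`) of the refined analysis: for `y, z ∈ [0, 0.2]`,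
`max(1 + y, √(1 + 4z²)) / min(2, 1 + √3/2 + z + (2/√3) y) ≥ (4√3 + 2 − 27^{1/4})/13`. -/
theorem stmt_15 (y z : ℝ) (hy0 : 0 ≤ y) (hy1 : y ≤ 0.2) (hz0 : 0 ≤ z) (hz1 : z ≤ 0.2) :
    max (1 + y) (Real.sqrt (1 + 4 * z ^ 2)) /
        min 2 (1 + Real.sqrt 3 / 2 + z + (2 / Real.sqrt 3) * y)
      ≥ (4 * Real.sqrt 3 + 2 - (27 : ℝ) ^ ((1 : ℝ) / 4)) / 13 := by
  have hs0 : (0:ℝ) < Real.sqrt 3 := Real.sqrt_pos.mpr (by norm_num)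
  have hs : (Real.sqrt 3) ^ 2 = 3 := Real.sq_sqrt (by norm_num)
  have hq0 : (0:ℝ) < (27 : ℝ) ^ ((1 : ℝ) / 4) := Real.rpow_pos_of_pos (by norm_num) _
  have hq4 : ((27 : ℝ) ^ ((1 : ℝ) / 4)) ^ 4 = 27 := by
    rw [← Real.rpow_natCast ((27 : ℝ) ^ ((1:ℝ)/4)) 4, ← Real.rpow_mul (by norm_num)]
    norm_num
  have hq2 : ((27 : ℝ) ^ ((1 : ℝ) / 4)) ^ 2 = 3 * Real.sqrt 3 := by
    have h1 : (((27 : ℝ) ^ ((1 : ℝ) / 4)) ^ 2) ^ 2 = (3 * Real.sqrt 3) ^ 2 := by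
      rw [← pow_mul, mul_pow, hs]; norm_num; linarith [hq4]
    have h2 : (0:ℝ) ≤ ((27 : ℝ) ^ ((1 : ℝ) / 4)) ^ 2 := sq_nonneg _
    have h3 : (0:ℝ) ≤ 3 * Real.sqrt 3 := by linarith
    nlinarith [h1, h2, h3]
  obtain ⟨hsl, hsu, hql, hqu⟩ := aux_bounds hs0 hs hq0 hq2
  have hN1 : 1 + y ≤ max (1 + y) (Real.sqrt (1 + 4 * z ^ 2)) := le_max_left _ _
  have ht0 : (0:ℝ) ≤ Real.sqrt (1 + 4 * z ^ 2) := Real.sqrt_nonneg _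
  have ht2 : (Real.sqrt (1 + 4 * z ^ 2)) ^ 2 = 1 + 4 * z ^ 2 :=
    Real.sq_sqrt (by positivity)
  have hN2 : Real.sqrt (1 + 4 * z ^ 2) ≤ max (1 + y) (Real.sqrt (1 + 4 * z ^ 2)) :=
    le_max_right _ _
  have hN0 : (0:ℝ) < max (1 + y) (Real.sqrt (1 + 4 * z ^ 2)) :=
    lt_of_lt_of_le (by linarith) hN1
  have hD2 : min 2 (1 + Real.sqrt 3 / 2 + z + (2 / Real.sqrt 3) * y) ≤ 2 := min_le_left _ _
  have hDL : min 2 (1 + Real.sqrt 3 / 2 + z + (2 / Real.sqrt 3) * y) ≤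
      1 + Real.sqrt 3 / 2 + z + (2 / Real.sqrt 3) * y := min_le_right _ _
  have h2s : (2 : ℝ) / Real.sqrt 3 = 2 * Real.sqrt 3 / 3 := by
    rw [div_eq_div_iff hs0.ne' (by norm_num : (3:ℝ) ≠ 0)]
    nlinarith [hs]
  have hDL' : min 2 (1 + Real.sqrt 3 / 2 + z + (2 / Real.sqrt 3) * y) ≤
      1 + Real.sqrt 3 / 2 + z + (2 * Real.sqrt 3 / 3) * y :=
    le_trans hDL (le_of_eq (by rw [h2s]))
  have hy' : (0:ℝ) ≤ (2 / Real.sqrt 3) * y := by positivity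
  have hD0 : (0:ℝ) < min 2 (1 + Real.sqrt 3 / 2 + z + (2 / Real.sqrt 3) * y) :=
    lt_min (by norm_num) (by nlinarith [hs0])
  have htan := aux_tangent hs hq2 hsl hsu hql hqu hz0 ht0 ht2
  have hN2' : 1 + 4 * ((-3 : ℝ) / 13 - Real.sqrt 3 / 26 +
        (4 / 39) * (Real.sqrt 3 * (27 : ℝ) ^ ((1 : ℝ) / 4))) * z ≤
      max (1 + y) (Real.sqrt (1 + 4 * z ^ 2)) *
        ((4 - 2 * (27 : ℝ) ^ ((1 : ℝ) / 4) + 8 * Real.sqrt 3) / 13) := by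
    refine le_trans htan (mul_le_mul_of_nonneg_right hN2 ?_)
    nlinarith [hsl, hqu]
  have hfin := aux_main hs hq2 hsl hsu hql hqu hN1 hN2' hD2 hDL'
  rw [ge_iff_le, div_le_div_iff₀ (by norm_num) hD0]
  nlinarith [hfin]
end

section
/- For x ∈ [0, 1 − √3/2], the function f(x) = (1 + √(1 + 4x²)) / (2 + √3 + 2x) is non-increasing, and its minimum on that interval equals (1 + 2√(2 − √3))/4. -/
/-- On `[0, 1 − √3/2]` the function `f(x) = (1 + √(1 + 4x²)) / (2 + √3 + 2x)` is
non-increasing, and its minimum there equals `(1 + 2√(2 − √3))/4`. -/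

theorem stmt_17 :
    AntitoneOn (fun x : ℝ => (1 + Real.sqrt (1 + 4 * x ^ 2)) / (2 + Real.sqrt 3 + 2 * x))
        (Set.Icc 0 (1 - Real.sqrt 3 / 2)) ∧
      IsLeast ((fun x : ℝ => (1 + Real.sqrt (1 + 4 * x ^ 2)) / (2 + Real.sqrt 3 + 2 * x)) ''
          Set.Icc 0 (1 - Real.sqrt 3 / 2))
        ((1 + 2 * Real.sqrt (2 - Real.sqrt 3)) / 4) := by
  have h3sq : Real.sqrt 3 ^ 2 = 3 := Real.sq_sqrt (by norm_num)
  have h3nn : (0:ℝ) ≤ Real.sqrt 3 := Real.sqrt_nonneg 3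
  have h3lt : Real.sqrt 3 < 2 := by nlinarith [h3sq, h3nn]
  have h3gt : (1:ℝ) < Real.sqrt 3 := by nlinarith [h3sq, h3nn]
  have hx0 : (0:ℝ) ≤ 1 - Real.sqrt 3 / 2 := by linarith
  have hanti : AntitoneOn (fun x : ℝ => (1 + Real.sqrt (1 + 4 * x ^ 2)) / (2 + Real.sqrt 3 + 2 * x))
      (Set.Icc 0 (1 - Real.sqrt 3 / 2)) := by
    rintro a ⟨ha0, ha1⟩ b ⟨hb0, hb1⟩ hab
    simp only
    have hda : (0:ℝ) < 2 + Real.sqrt 3 + 2 * a := by linarith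
    have hdb : (0:ℝ) < 2 + Real.sqrt 3 + 2 * b := by linarith
    set u := Real.sqrt (1 + 4 * a ^ 2) with hu
    set v := Real.sqrt (1 + 4 * b ^ 2) with hv
    have hu2 : u ^ 2 = 1 + 4 * a ^ 2 := Real.sq_sqrt (by positivity)
    have hv2 : v ^ 2 = 1 + 4 * b ^ 2 := Real.sq_sqrt (by positivity)
    have hu1 : 1 ≤ u := by
      rw [show (1:ℝ) = Real.sqrt 1 by simp [Real.sqrt_one]]
      exact Real.sqrt_le_sqrt (by nlinarith)
    have huv : u ≤ v := Real.sqrt_le_sqrt (by nlinarith)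
    rw [div_le_div_iff₀ hdb hda]
    nlinarith [mul_nonneg (sub_nonneg.2 hab) (sub_nonneg.2 huv),
      mul_nonneg (mul_nonneg (sub_nonneg.2 hab) (sub_nonneg.2 huv)) h3nn,
      mul_nonneg ha0 (sub_nonneg.2 huv), mul_nonneg hb0 (sub_nonneg.2 huv),
      mul_nonneg (sub_nonneg.2 hab) (by linarith : (0:ℝ) ≤ u), sq_nonneg (u - v), sq_nonneg (u + v),
      mul_nonneg (mul_nonneg ha0 hb0) (sub_nonneg.2 huv),
      mul_pos hda hdb]
  refine ⟨hanti, ?_, ?_⟩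
  · refine ⟨1 - Real.sqrt 3 / 2, ⟨hx0, le_refl _⟩, ?_⟩
    have hval : Real.sqrt (1 + 4 * (1 - Real.sqrt 3 / 2) ^ 2) = 2 * Real.sqrt (2 - Real.sqrt 3) := by
      have : 1 + 4 * (1 - Real.sqrt 3 / 2) ^ 2 = 4 * (2 - Real.sqrt 3) := by nlinarith [h3sq]
      rw [this, show (4:ℝ) * (2 - Real.sqrt 3) = 2^2 * (2 - Real.sqrt 3) by ring,
        Real.sqrt_mul (by positivity), Real.sqrt_sq (by norm_num)]
    simp only [hval]
    rw [show 2 + Real.sqrt 3 + 2 * (1 - Real.sqrt 3 / 2) = 4 by ring]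
  · rintro y ⟨x, ⟨hx0', hx1⟩, rfl⟩
    have key := hanti ⟨hx0', hx1⟩ ⟨hx0, le_refl _⟩ hx1
    have hval : Real.sqrt (1 + 4 * (1 - Real.sqrt 3 / 2) ^ 2) = 2 * Real.sqrt (2 - Real.sqrt 3) := by
      have : 1 + 4 * (1 - Real.sqrt 3 / 2) ^ 2 = 4 * (2 - Real.sqrt 3) := by nlinarith [h3sq]
      rw [this, show (4:ℝ) * (2 - Real.sqrt 3) = 2^2 * (2 - Real.sqrt 3) by ring,
        Real.sqrt_mul (by positivity), Real.sqrt_sq (by norm_num)]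
    simp only [hval] at key
    rw [show 2 + Real.sqrt 3 + 2 * (1 - Real.sqrt 3 / 2) = 4 by ring] at key
    exact key
end
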